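/- Let n pairs of reals (aᵢ, bᵢ) be given. Let S_x ⊆ {1,…,n} be a maximum-size subset that is consistent in the first coordinate (for i, j ∈ S_x: aᵢ ≤ aⱼ iff bᵢ ≤ bⱼ cannot be violated in the a-order sense), and let S_xy ⊆ S_x be a maximum-size subset of S_x consistent in the second coordinate. Then S_xy is consistent in both coordinates, and |S_xy| ≥ |T| is NOT guaranteed for the maximum jointly-consistent set T; i.e., there exists an instance where |S_xy| < |T| for every choice of maximum S_x. -/
import Mathlib


/-- A set of indices is consistent in coordinate `a` if the index order (the order in the
first image) agrees with the order of `a` (the coordinate in the second image). -/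
def ConsIn {n : ℕ} (a : Fin n → ℝ) (S : Finset (Fin n)) : Prop :=
  ∀ i ∈ S, ∀ j ∈ S, i ≤ j → a i ≤ a j

/-- The two-stage method (maximum `x`-consistent set, then maximum `y`-consistent subset
of it) always outputs a set consistent in both coordinates, but there is an instance on
which its output is strictly smaller than the maximum jointly-consistent set, for every
choice of maximum first-stage set. -/
theorem stmt16 :
    (∀ (n : ℕ) (a b : Fin n → ℝ) (Sx Sxy : Finset (Fin n)),
      ConsIn a Sx → Sxy ⊆ Sx → ConsIn b Sxy → ConsIn a Sxy ∧ ConsIn b Sxy) ∧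
    (∃ (n : ℕ) (a b : Fin n → ℝ),
      ∀ Sx : Finset (Fin n),
        (ConsIn a Sx ∧ ∀ S' : Finset (Fin n), ConsIn a S' → S'.card ≤ Sx.card) →
      ∀ Sxy : Finset (Fin n),
        (Sxy ⊆ Sx ∧ ConsIn b Sxy ∧
          ∀ S'' : Finset (Fin n), S'' ⊆ Sx → ConsIn b S'' → S''.card ≤ Sxy.card) →
      ∃ T : Finset (Fin n), ConsIn a T ∧ ConsIn b T ∧ Sxy.card < T.card) := by
  constructor
  · intro n a b Sx Sxy hSx hsub hb
    exact ⟨fun i hi j hj hij => hSx i (hsub hi) j (hsub hj) hij, hb⟩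
  · refine ⟨5, ![0,1,2,-5,-4], ![2,1,0,5,6], ?_⟩
    intro Sx ⟨hSxa, hSxmax⟩ Sxy ⟨hsub, hSxyb, _⟩
    have h012 : ConsIn ![0,1,2,-5,-4] ({0,1,2} : Finset (Fin 5)) := by
      intro i hi j hj hij
      fin_cases hi <;> fin_cases hj <;> simp_all <;> norm_num
    have hcard : 3 ≤ Sx.card := by
      have := hSxmax _ h012
      simpa using this
    have hsub012 : Sx ⊆ ({0,1,2} : Finset (Fin 5)) := by
      intro i hi
      by_contra hi'
      have hne : ¬ Sx ⊆ ({3,4} : Finset (Fin 5)) := by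
        intro h
        have := Finset.card_le_card h
        have h2 : ({3,4} : Finset (Fin 5)).card ≤ 2 := by decide
        omega
      obtain ⟨j, hj, hj'⟩ := Finset.not_subset.mp hne
      have hji : j ≤ i := by
        fin_cases i <;> fin_cases j <;> simp_all <;> omega
      have := hSxa j hj i hi hji
      fin_cases i <;> fin_cases j <;> simp_all <;> norm_num at this
    have hxy1 : Sxy.card ≤ 1 := by
      by_contra h
      push_neg at h
      obtain ⟨i, hi, j, hj, hij⟩ := Finset.one_lt_card.mp h
      have hia := hsub012 (hsub hi)
      have hja := hsub012 (hsub hj)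
      rcases lt_or_gt_of_ne hij with h' | h'
      · have hb := hSxyb i hi j hj h'.le
        fin_cases hia <;> fin_cases hja <;> simp_all <;> norm_num at hb
      · have hb := hSxyb j hj i hi h'.le
        fin_cases hia <;> fin_cases hja <;> simp_all <;> norm_num at hb
    refine ⟨{3,4}, ?_, ?_, ?_⟩
    · intro i hi j hj hij
      fin_cases hi <;> fin_cases hj <;> simp_all <;> norm_num
    · intro i hi j hj hij
      fin_cases hi <;> fin_cases hj <;> simp_all <;> norm_num
    · have : ({3,4} : Finset (Fin 5)).card = 2 := by decide
      omega
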